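/- arXiv:2302.03963 — 2 statements merged into one kernel-verified Lean document; each statement's English description precedes it below -/
import Mathlib

section
/- Let Y ⊆ ℝ^m be a nonempty finite set and Z a standard Gaussian random vector in ℝ^m. Then F(θ) = E[max_{y ∈ Y} (θ + Z)ᵀ y] is differentiable at every θ ∈ ℝ^m with gradient ∇F(θ) = E[argmax_{y ∈ Y} (θ + Z)ᵀ y], where the argmax is almost surely unique provided distinct elements of Y differ (more precisely, the set of z with non-unique argmax has Lebesgue measure zero when Y has at least two distinct elements, and the expectation of any measurable argmax selection is well-defined and equals ∇F(θ)). -/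
open scoped RealInnerProductSpace
open MeasureTheory

/-- `Z` is a standard Gaussian random vector in `ℝ^m`: its coordinates are independent
and each is distributed as `N(0,1)`. -/
def IsStdGaussian {Ω : Type*} [MeasurableSpace Ω] (μ : Measure Ω) {m : ℕ}
    (Z : Ω → EuclideanSpace ℝ (Fin m)) : Prop :=
  (∀ i, Measure.map (fun ω => Z ω i) μ = ProbabilityTheory.gaussianReal 0 1) ∧
    ProbabilityTheory.iIndepFun (m := fun _ : Fin m => (inferInstance : MeasurableSpace ℝ))
      (fun i ω => Z ω i) μ

section Aux

open Metric Set Filter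

/-- The standard Gaussian on `ℝ` integrates the identity. -/
lemma integrable_id_gauss : Integrable (fun x : ℝ => x) (ProbabilityTheory.gaussianReal 0 1) := by
  rw [ProbabilityTheory.gaussianReal_of_var_ne_zero _ one_ne_zero]
  rw [integrable_withDensity_iff (ProbabilityTheory.measurable_gaussianPDF 0 1)
    (Filter.Eventually.of_forall fun x => ENNReal.ofReal_lt_top)]
  have h := (integrable_mul_exp_neg_mul_sq (b := (2:ℝ)⁻¹) (by norm_num)).const_mul
    ((Real.sqrt (2 * Real.pi * 1))⁻¹)
  refine h.congr (Filter.Eventually.of_forall fun x => ?_)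
  simp only [ProbabilityTheory.gaussianPDF]
  rw [ENNReal.toReal_ofReal (ProbabilityTheory.gaussianPDFReal_nonneg 0 1 x)]
  simp only [ProbabilityTheory.gaussianPDFReal]
  push_cast
  ring_nf

/-- A hyperplane through the origin has Lebesgue measure zero. -/
lemma hyperplane_null {m : ℕ} {d : EuclideanSpace ℝ (Fin m)} (hd : d ≠ 0) :
    (volume : Measure (EuclideanSpace ℝ (Fin m))) {z | ⟪z, d⟫ = (0:ℝ)} = 0 := by
  have hset : {z : EuclideanSpace ℝ (Fin m) | ⟪z, d⟫ = (0:ℝ)}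
      = ((LinearMap.ker (innerSL ℝ d : EuclideanSpace ℝ (Fin m) →ₗ[ℝ] ℝ) : Submodule ℝ (EuclideanSpace ℝ (Fin m))) : Set (EuclideanSpace ℝ (Fin m))) := by
    ext z
    simp only [Set.mem_setOf_eq, SetLike.mem_coe, LinearMap.mem_ker,
      ContinuousLinearMap.coe_coe, innerSL_apply_apply]
    rw [real_inner_comm]
  rw [hset]
  refine Measure.addHaar_submodule _ _ ?_
  intro h
  have : (innerSL ℝ d) d = 0 := by
    simpa [LinearMap.mem_ker] using (h.symm ▸ Submodule.mem_top : d ∈ LinearMap.ker (innerSL ℝ d : EuclideanSpace ℝ (Fin m) →ₗ[ℝ] ℝ))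
  simp only [innerSL_apply_apply, real_inner_self_eq_norm_sq] at this
  exact hd (by simpa using norm_eq_zero.1 (by nlinarith [sq_nonneg ‖d‖, norm_nonneg d] : ‖d‖ = 0))

/-- For a nonzero direction `d`, the event `⟪Z, d⟫ = c` is null under a standard Gaussian. -/
lemma inner_event_null {m : ℕ} {Ω : Type*} [MeasurableSpace Ω] (μ : Measure Ω)
    [IsProbabilityMeasure μ] (Z : Ω → EuclideanSpace ℝ (Fin m)) (hZmeas : Measurable Z)
    (hZ : IsStdGaussian μ Z) {d : EuclideanSpace ℝ (Fin m)} (hd : d ≠ 0) (c : ℝ) :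
    μ {ω | ⟪Z ω, d⟫ = c} = 0 := by
  obtain ⟨j, hj⟩ : ∃ j, d j ≠ 0 := by
    by_contra h
    push_neg at h
    exact hd (by ext i; simpa using h i)
  have hZi : ∀ i, Measurable fun ω => Z ω i := fun i => (measurable_pi_apply i).comp (Measurable.comp (WithLp.measurable_ofLp _ _) hZmeas)
  set f : Fin m → Ω → ℝ := fun i ω => d i * Z ω i with hf
  have hfmeas : ∀ i, Measurable (f i) := fun i => (hZi i).const_mul _
  have hindep : ProbabilityTheory.iIndepFun (m := fun _ : Fin m => (inferInstance : MeasurableSpace ℝ))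
      f μ := hZ.2.comp (fun i x => d i * x) (fun i => measurable_const_mul _)
  set W : Ω → ℝ := ∑ i ∈ Finset.univ.erase j, f i with hW
  have hWapp : ∀ ω, W ω = ∑ i ∈ Finset.univ.erase j, f i ω := by
    intro ω; rw [hW]; simp [Finset.sum_apply]
  have hWmeas : Measurable W := by
    have : Measurable fun ω => ∑ i ∈ Finset.univ.erase j, f i ω :=
      Finset.measurable_sum _ fun i _ => hfmeas i
    simpa [funext hWapp] using this
  have hXW : ProbabilityTheory.IndepFun W (f j) μ :=
    hindep.indepFun_finset_sum_of_notMem hfmeas (Finset.notMem_erase j Finset.univ)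
  have hatom : ∀ t : ℝ, Measure.map (f j) μ {t} = 0 := by
    intro t
    have hmap : Measure.map (f j) μ
        = Measure.map (fun x : ℝ => d j * x) (ProbabilityTheory.gaussianReal 0 1) := by
      rw [← hZ.1 j, Measure.map_map (measurable_const_mul _) (hZi j)]
      rfl
    rw [hmap, Measure.map_apply (measurable_const_mul _) (measurableSet_singleton t)]
    have : (fun x : ℝ => d j * x) ⁻¹' {t} = {t / d j} := by
      ext x
      simp [eq_comm, eq_div_iff hj, mul_comm]
    rw [this]
    exact ProbabilityTheory.gaussianReal_absolutelyContinuous 0 one_ne_zero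
      (Real.volume_singleton)
  have hev : {ω | ⟪Z ω, d⟫ = c} = {ω | (W ω, f j ω) ∈ {p : ℝ × ℝ | p.1 + p.2 = c}} := by
    ext ω
    simp only [Set.mem_setOf_eq, hWapp]
    rw [Finset.sum_erase_add _ _ (Finset.mem_univ j)]
    constructor
    · intro h; rw [← h]
      simp only [PiLp.inner_apply, RCLike.inner_apply, conj_trivial, hf]
    · intro h; rw [← h]
      simp only [PiLp.inner_apply, RCLike.inner_apply, conj_trivial, hf]
  have hSmeas : MeasurableSet {p : ℝ × ℝ | p.1 + p.2 = c} :=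
    (isClosed_eq (continuous_fst.add continuous_snd) continuous_const).measurableSet
  rw [hev]
  show μ ((fun ω => (W ω, f j ω)) ⁻¹' {p : ℝ × ℝ | p.1 + p.2 = c}) = 0
  rw [← Measure.map_apply (hWmeas.prodMk (hfmeas j)) hSmeas]
  rw [(ProbabilityTheory.indepFun_iff_map_prod_eq_prod_map_map hWmeas.aemeasurable
    (hfmeas j).aemeasurable).1 hXW]
  haveI : IsProbabilityMeasure (Measure.map W μ) := Measure.isProbabilityMeasure_map hWmeas.aemeasurable
  haveI : IsProbabilityMeasure (Measure.map (f j) μ) :=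
    Measure.isProbabilityMeasure_map (hfmeas j).aemeasurable
  rw [Measure.prod_apply hSmeas]
  have : ∀ x : ℝ, (Prod.mk x ⁻¹' {p : ℝ × ℝ | p.1 + p.2 = c}) = {c - x} := by
    intro x; ext y; simp [eq_sub_iff_add_eq, eq_comm, add_comm]
  simp only [this, hatom, lintegral_zero]

/-- At a point where the maximizer is strict, the perturbed max is differentiable with
derivative given by the maximizer. -/
lemma hasFDeriv_sup' {m : ℕ} (Y : Finset (EuclideanSpace ℝ (Fin m))) (hY : Y.Nonempty)
    (w θ ys : EuclideanSpace ℝ (Fin m)) (hysY : ys ∈ Y)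
    (hstrict : ∀ y ∈ Y, y ≠ ys → ⟪θ + w, y⟫ < ⟪θ + w, ys⟫) :
    HasFDerivAt (fun x => Y.sup' hY (fun y => ⟪x + w, y⟫))
      ((InnerProductSpace.toDual ℝ (EuclideanSpace ℝ (Fin m))) ys) θ := by
  classical
  have hlin : HasFDerivAt (fun x : EuclideanSpace ℝ (Fin m) =>
      ((InnerProductSpace.toDual ℝ (EuclideanSpace ℝ (Fin m))) ys) x + ⟪ys, w⟫)
      ((InnerProductSpace.toDual ℝ (EuclideanSpace ℝ (Fin m))) ys) θ :=
    ((InnerProductSpace.toDual ℝ (EuclideanSpace ℝ (Fin m))) ys).hasFDerivAt.add_const _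
  refine hlin.congr_of_eventuallyEq ?_
  set U : Set (EuclideanSpace ℝ (Fin m)) :=
    ⋂ y ∈ Y.erase ys, {x | ⟪x + w, y⟫ < ⟪x + w, ys⟫} with hU
  have hUopen : IsOpen U := by
    refine isOpen_biInter_finset fun y _ => ?_
    exact isOpen_lt ((continuous_id.add continuous_const).inner continuous_const)
      ((continuous_id.add continuous_const).inner continuous_const)
  have hθU : θ ∈ U := by
    simp only [hU, Set.mem_iInter, Set.mem_setOf_eq]
    intro y hy
    exact hstrict y (Finset.mem_of_mem_erase hy) (Finset.ne_of_mem_erase hy)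
  refine Filter.eventuallyEq_of_mem (hUopen.mem_nhds hθU) fun x hx => ?_
  have hx' : ∀ y ∈ Y, y ≠ ys → ⟪x + w, y⟫ < ⟪x + w, ys⟫ := by
    intro y hy hne
    simp only [hU, Set.mem_iInter, Set.mem_setOf_eq] at hx
    exact hx y (Finset.mem_erase.2 ⟨hne, hy⟩)
  have : Y.sup' hY (fun y => ⟪x + w, y⟫) = ⟪x + w, ys⟫ := by
    refine le_antisymm (Finset.sup'_le _ _ fun y hy => ?_) (Finset.le_sup' _ hysY)
    by_cases h : y = ys
    · rw [h]
    · exact (hx' y hy h).le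
  rw [this, InnerProductSpace.toDual_apply_apply, inner_add_left, real_inner_comm x ys,
    real_inner_comm w ys]

/-- The perturbed max is Lipschitz with constant `max ‖y‖`. -/
lemma lipschitz_sup' {m : ℕ} (Y : Finset (EuclideanSpace ℝ (Fin m))) (hY : Y.Nonempty)
    (w : EuclideanSpace ℝ (Fin m)) :
    LipschitzWith (Real.nnabs (Y.sup' hY fun y => ‖y‖))
      (fun x : EuclideanSpace ℝ (Fin m) => Y.sup' hY (fun y => ⟪x + w, y⟫)) := by
  set C : ℝ := Y.sup' hY fun y => ‖y‖ with hC
  have key : ∀ x1 x2 : EuclideanSpace ℝ (Fin m),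
      Y.sup' hY (fun y => ⟪x1 + w, y⟫) - Y.sup' hY (fun y => ⟪x2 + w, y⟫)
        ≤ |C| * dist x1 x2 := by
    intro x1 x2
    rw [sub_le_iff_le_add]
    refine Finset.sup'_le _ _ fun y hy => ?_
    have h1 : ⟪x1 + w, y⟫ - ⟪x2 + w, y⟫ = ⟪x1 - x2, y⟫ := by
      rw [← inner_sub_left]; congr 1; abel
    have h2 : ⟪x1 - x2, y⟫ ≤ ‖x1 - x2‖ * ‖y‖ := real_inner_le_norm _ _
    have h3 : ‖y‖ ≤ |C| := le_trans (Finset.le_sup' (fun y => ‖y‖) hy) (le_abs_self C)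
    have h4 : ⟪x2 + w, y⟫ ≤ Y.sup' hY (fun y => ⟪x2 + w, y⟫) := Finset.le_sup' _ hy
    have h5 : ‖x1 - x2‖ * ‖y‖ ≤ |C| * dist x1 x2 := by
      rw [dist_eq_norm, mul_comm]
      exact mul_le_mul h3 le_rfl (norm_nonneg _) (abs_nonneg _)
    nlinarith
  refine LipschitzWith.of_dist_le_mul fun x1 x2 => ?_
  rw [Real.dist_eq, Real.coe_nnabs, abs_sub_le_iff]
  exact ⟨key x1 x2, by rw [dist_comm]; exact key x2 x1⟩

end Aux

/-- The Gaussian-smoothed maximum `F(θ) = E[max_{y ∈ Y} (θ + Z)ᵀ y]` over a nonempty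
finite set `Y ⊆ ℝ^m` is differentiable everywhere with gradient
`∇F(θ) = E[argmax_{y ∈ Y} (θ + Z)ᵀ y]`: when `Y` has at least two elements the set of
perturbations with non-unique argmax has Lebesgue measure zero, and for any measurable
argmax selection `g` its expectation is well-defined (integrable) and is the gradient
of `F` at `θ`. -/
theorem smoothed_max_gradient {m : ℕ} {Ω : Type*} [MeasurableSpace Ω]
    (μ : Measure Ω) [IsProbabilityMeasure μ]
    (Y : Finset (EuclideanSpace ℝ (Fin m))) (hY : Y.Nonempty)
    (Z : Ω → EuclideanSpace ℝ (Fin m)) (hZmeas : Measurable Z)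
    (hZ : IsStdGaussian μ Z) :
    (2 ≤ Y.card →
      volume {z : EuclideanSpace ℝ (Fin m) |
        ¬ ∃! y, y ∈ Y ∧ ∀ y' ∈ Y, ⟪z, y'⟫ ≤ ⟪z, y⟫} = 0) ∧
    ∀ (g : EuclideanSpace ℝ (Fin m) → EuclideanSpace ℝ (Fin m)),
      Measurable g → (∀ z, g z ∈ Y ∧ ∀ y ∈ Y, ⟪z, y⟫ ≤ ⟪z, g z⟫) →
      ∀ θ : EuclideanSpace ℝ (Fin m),
        Integrable (fun ω => g (θ + Z ω)) μ ∧
        HasGradientAt (fun θ' : EuclideanSpace ℝ (Fin m) =>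
            ∫ ω, Y.sup' hY (fun y => ⟪θ' + Z ω, y⟫) ∂μ)
          (∫ ω, g (θ + Z ω) ∂μ) θ := by
  classical
  have hzi : ∀ z : EuclideanSpace ℝ (Fin m),
      (¬ ∃! y, y ∈ Y ∧ ∀ y' ∈ Y, ⟪z, y'⟫ ≤ ⟪z, y⟫) →
      ∃ y1 ∈ Y, ∃ y2 ∈ Y, y1 ≠ y2 ∧ ⟪z, y1 - y2⟫ = (0:ℝ) := by
    intro z h
    obtain ⟨y0, hy0, hmax⟩ := Y.exists_max_image (fun y => (⟪z, y⟫:ℝ)) hY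
    by_contra h2
    push_neg at h2
    refine h ⟨y0, ⟨hy0, hmax⟩, ?_⟩
    rintro y ⟨hyY, hymax⟩
    by_contra hne
    have h1 : (⟪z, y⟫:ℝ) = ⟪z, y0⟫ := le_antisymm (hmax y hyY) (hymax y0 hy0)
    have h0 : (⟪z, y - y0⟫:ℝ) = 0 := by rw [inner_sub_right, h1, sub_self]
    exact (h2 y hyY y0 hy0 hne) h0
  constructor
  · intro _
    refine measure_mono_null (fun z hz => ?_)
      (?_ : volume (⋃ y1 ∈ (Y : Set (EuclideanSpace ℝ (Fin m))),
        ⋃ y2 ∈ (Y : Set (EuclideanSpace ℝ (Fin m))),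
          {z : EuclideanSpace ℝ (Fin m) | ⟪z, y1 - y2⟫ = (0:ℝ) ∧ y1 ≠ y2}) = 0)
    · obtain ⟨y1, h1, y2, h2, hne, hz0⟩ := hzi z hz
      exact Set.mem_biUnion h1 (Set.mem_biUnion h2 ⟨hz0, hne⟩)
    · rw [measure_biUnion_null_iff Y.countable_toSet]
      intro y1 _
      rw [measure_biUnion_null_iff Y.countable_toSet]
      intro y2 _
      rcases eq_or_ne y1 y2 with h | h
      · have : {z : EuclideanSpace ℝ (Fin m) | ⟪z, y1 - y2⟫ = (0:ℝ) ∧ y1 ≠ y2} = ∅ := by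
          ext z; simp [h]
        rw [this]; exact measure_empty
      · exact measure_mono_null (fun z hz => hz.1) (hyperplane_null (sub_ne_zero.2 h))
  · intro g hg hgmax θ
    set C : ℝ := Y.sup' hY (fun y => ‖y‖) with hC
    have hZi : ∀ i, Measurable fun ω => Z ω i := fun i => (measurable_pi_apply i).comp (Measurable.comp (WithLp.measurable_ofLp _ _) hZmeas)
    have hZiint : ∀ i, Integrable (fun ω => Z ω i) μ := by
      intro i
      have h0 : Integrable (id : ℝ → ℝ) (Measure.map (fun ω => Z ω i) μ) := by
        rw [hZ.1 i]; exact integrable_id_gauss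
      exact (integrable_map_measure aestronglyMeasurable_id (hZi i).aemeasurable).1 h0
    have hinnerZ : ∀ y : EuclideanSpace ℝ (Fin m), Integrable (fun ω => (⟪Z ω, y⟫:ℝ)) μ := by
      intro y
      have : (fun ω => (⟪Z ω, y⟫:ℝ)) = fun ω => ∑ i, Z ω i * y i := by
        funext ω; simp [PiLp.inner_apply, RCLike.inner_apply, mul_comm]
      rw [this]
      exact integrable_finset_sum _ fun i _ => (hZiint i).mul_const _
    have hsupcont : ∀ x : EuclideanSpace ℝ (Fin m),
        Continuous fun z : EuclideanSpace ℝ (Fin m) => Y.sup' hY fun y => (⟪x + z, y⟫:ℝ) :=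
      fun x => Continuous.finset_sup'_apply hY fun y _ =>
        (continuous_const.add continuous_id).inner continuous_const
    have hFmeas : ∀ x : EuclideanSpace ℝ (Fin m),
        AEStronglyMeasurable (fun ω => Y.sup' hY fun y => (⟪x + Z ω, y⟫:ℝ)) μ := fun x =>
      (((hsupcont x).measurable).comp hZmeas).aestronglyMeasurable
    have habs : ∀ (x : EuclideanSpace ℝ (Fin m)) (ω),
        |Y.sup' hY fun y => (⟪x + Z ω, y⟫:ℝ)| ≤ ∑ y ∈ Y, (|(⟪x, y⟫:ℝ)| + |(⟪Z ω, y⟫:ℝ)|) := by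
      intro x ω
      obtain ⟨y0, hy0, hval⟩ := Finset.exists_mem_eq_sup' hY (fun y => (⟪x + Z ω, y⟫:ℝ))
      rw [hval]
      calc |(⟪x + Z ω, y0⟫:ℝ)| = |(⟪x, y0⟫:ℝ) + ⟪Z ω, y0⟫| := by rw [inner_add_left]
        _ ≤ |(⟪x, y0⟫:ℝ)| + |(⟪Z ω, y0⟫:ℝ)| := abs_add_le _ _
        _ ≤ ∑ y ∈ Y, (|(⟪x, y⟫:ℝ)| + |(⟪Z ω, y⟫:ℝ)|) :=
            Finset.single_le_sum (f := fun y => |(⟪x, y⟫:ℝ)| + |(⟪Z ω, y⟫:ℝ)|)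
              (fun y _ => by positivity) hy0
    have hFint : Integrable (fun ω => Y.sup' hY fun y => (⟪θ + Z ω, y⟫:ℝ)) μ := by
      have hbound : Integrable (fun ω => ∑ y ∈ Y, (|(⟪θ, y⟫:ℝ)| + |(⟪Z ω, y⟫:ℝ)|)) μ := by
        refine integrable_finset_sum _ fun y _ => ?_
        exact (integrable_const (|(⟪θ, y⟫:ℝ)|)).add (hinnerZ y).abs
      refine Integrable.mono' hbound (hFmeas θ) (Filter.Eventually.of_forall fun ω => ?_)
      rw [Real.norm_eq_abs]
      exact habs θ ω
    have hgZmeas : AEStronglyMeasurable (fun ω => g (θ + Z ω)) μ :=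
      (hg.comp (measurable_const.add hZmeas)).aestronglyMeasurable
    have hgint : Integrable (fun ω => g (θ + Z ω)) μ := by
      refine Integrable.mono' (integrable_const C) hgZmeas
        (Filter.Eventually.of_forall fun ω => ?_)
      exact Finset.le_sup' (fun y => ‖y‖) (hgmax (θ + Z ω)).1
    refine ⟨hgint, ?_⟩
    have hae : ∀ᵐ ω ∂μ, ∀ y1 ∈ (Y : Set (EuclideanSpace ℝ (Fin m))),
        ∀ y2 ∈ (Y : Set (EuclideanSpace ℝ (Fin m))), y1 ≠ y2 →
        (⟪θ + Z ω, y1⟫:ℝ) ≠ ⟪θ + Z ω, y2⟫ := by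
      rw [MeasureTheory.ae_ball_iff Y.countable_toSet]
      intro y1 h1
      rw [MeasureTheory.ae_ball_iff Y.countable_toSet]
      intro y2 h2
      rcases eq_or_ne y1 y2 with h | h
      · exact Filter.Eventually.of_forall fun ω hne => absurd h hne
      · have hnull := inner_event_null μ Z hZmeas hZ (sub_ne_zero.2 h) (-(⟪θ, y1 - y2⟫:ℝ))
        rw [MeasureTheory.ae_iff]
        refine measure_mono_null (fun ω hω => ?_) hnull
        rw [Set.mem_setOf_eq] at hω ⊢
        push_neg at hω
        have h0 : (⟪θ + Z ω, y1 - y2⟫:ℝ) = 0 := by rw [inner_sub_right, hω.2, sub_self]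
        rw [inner_add_left] at h0
        linarith
    have hdiff : ∀ᵐ ω ∂μ, HasFDerivAt
        (fun x : EuclideanSpace ℝ (Fin m) => Y.sup' hY fun y => (⟪x + Z ω, y⟫:ℝ))
        ((InnerProductSpace.toDual ℝ (EuclideanSpace ℝ (Fin m))) (g (θ + Z ω))) θ := by
      refine hae.mono fun ω hω => ?_
      refine hasFDeriv_sup' Y hY (Z ω) θ (g (θ + Z ω)) (hgmax _).1 fun y hy hne => ?_
      exact lt_of_le_of_ne ((hgmax (θ + Z ω)).2 y hy)
        (hω y hy _ (hgmax (θ + Z ω)).1 hne)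
    have hF'meas : AEStronglyMeasurable
        (fun ω => (InnerProductSpace.toDual ℝ (EuclideanSpace ℝ (Fin m))) (g (θ + Z ω))) μ :=
      (InnerProductSpace.toDual ℝ (EuclideanSpace ℝ (Fin m))).continuous.comp_aestronglyMeasurable
        hgZmeas
    have hres := hasFDerivAt_integral_of_dominated_loc_of_lip (μ := μ)
      (F := fun (x : EuclideanSpace ℝ (Fin m)) ω => Y.sup' hY fun y => (⟪x + Z ω, y⟫:ℝ))
      (F' := fun ω => (InnerProductSpace.toDual ℝ (EuclideanSpace ℝ (Fin m))) (g (θ + Z ω)))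
      (x₀ := θ) (bound := fun _ => C) (s := Metric.ball θ 1) (Metric.ball_mem_nhds θ one_pos)
      (Filter.Eventually.of_forall hFmeas) hFint hF'meas
      (Filter.Eventually.of_forall fun ω => (lipschitz_sup' Y hY (Z ω)).lipschitzOnWith)
      (integrable_const C) hdiff
    obtain ⟨hF'int, hFderiv⟩ := hres
    have hkey : (∫ ω, (InnerProductSpace.toDual ℝ (EuclideanSpace ℝ (Fin m))) (g (θ + Z ω)) ∂μ)
        = (InnerProductSpace.toDual ℝ (EuclideanSpace ℝ (Fin m))) (∫ ω, g (θ + Z ω) ∂μ) := by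
      refine ContinuousLinearMap.ext fun v => ?_
      rw [ContinuousLinearMap.integral_apply hF'int]
      simp only [InnerProductSpace.toDual_apply_apply]
      rw [show (fun ω => (⟪g (θ + Z ω), v⟫:ℝ)) = fun ω => (⟪v, g (θ + Z ω)⟫:ℝ) from
        funext fun ω => real_inner_comm _ _]
      rw [integral_inner hgint v]
      exact real_inner_comm _ _
    rw [hkey] at hFderiv
    have := hFderiv.hasGradientAt
    rwa [LinearIsometryEquiv.symm_apply_apply] at this
end

section
/- Let Y ⊆ ℝ^m be a nonempty finite set, y* ∈ Y, and Z a standard Gaussian vector. The perturbed loss L(θ) = E[max_{y ∈ Y}(θ+Z)ᵀy] − θᵀy* has gradient ∇L(θ) = E[argmax_{y ∈ Y}(θ+Z)ᵀy] − y* (Equation (6) of the paper). -/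
open scoped RealInnerProductSpace
open MeasureTheory

open scoped NNReal
open ProbabilityTheory Real Filter

lemma integrable_id_gaussianReal : Integrable (fun x : ℝ => x) (gaussianReal 0 1) := by
  rw [gaussianReal_of_var_ne_zero 0 one_ne_zero]
  rw [integrable_withDensity_iff (measurable_gaussianPDF _ _)
    (ae_of_all _ fun x => ENNReal.ofReal_lt_top)]
  refine (integrable_exp_neg_mul_sq (by norm_num : (0:ℝ) < 1/4)).mono' ?_ ?_
  · exact (measurable_id.mul (measurable_gaussianPDF 0 1).ennreal_toReal).aestronglyMeasurable
  · refine ae_of_all _ fun x => ?_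
    have hpdf : (gaussianPDF 0 1 x).toReal = gaussianPDFReal 0 1 x := by
      rw [gaussianPDF]
      exact ENNReal.toReal_ofReal (gaussianPDFReal_nonneg _ _ _)
    have hx : |x| ≤ Real.exp (x^2/4) := by
      have h1 : |x| ≤ 1 + x^2/4 := by nlinarith [sq_nonneg (|x| - 2), sq_abs x]
      have h2 := Real.add_one_le_exp (x^2/4)
      linarith
    have hpdf2 : gaussianPDFReal 0 1 x ≤ Real.exp (-x^2/2) := by
      rw [gaussianPDFReal]
      push_cast
      have h1 : (Real.sqrt (2 * π * 1))⁻¹ ≤ 1 := by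
        rw [mul_one]
        refine inv_le_one_of_one_le₀ ?_
        rw [show (1:ℝ) = Real.sqrt 1 from (Real.sqrt_one).symm]
        exact Real.sqrt_le_sqrt (by nlinarith [Real.pi_gt_three])
      have h2 : Real.exp (-(x - 0)^2 / (2 * 1)) = Real.exp (-x^2/2) := by norm_num
      calc (Real.sqrt (2 * π * 1))⁻¹ * Real.exp (-(x - 0)^2 / (2 * 1))
          ≤ 1 * Real.exp (-(x - 0)^2 / (2 * 1)) :=
            mul_le_mul_of_nonneg_right h1 (Real.exp_pos _).le
        _ = Real.exp (-x^2/2) := by rw [one_mul, h2]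
    have key : |x| * gaussianPDFReal 0 1 x ≤ Real.exp (-(1/4) * x^2) := by
      calc |x| * gaussianPDFReal 0 1 x ≤ Real.exp (x^2/4) * Real.exp (-x^2/2) :=
            mul_le_mul hx hpdf2 (gaussianPDFReal_nonneg _ _ _) (Real.exp_pos _).le
        _ = Real.exp (x^2/4 + -x^2/2) := (Real.exp_add _ _).symm
        _ = Real.exp (-(1/4) * x^2) := by ring_nf
    calc ‖x * (gaussianPDF 0 1 x).toReal‖ = |x| * gaussianPDFReal 0 1 x := by
          rw [norm_mul, hpdf, Real.norm_eq_abs, Real.norm_eq_abs,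
            abs_of_nonneg (gaussianPDFReal_nonneg _ _ _)]
      _ ≤ Real.exp (-(1/4) * x^2) := key

lemma null_sum {m : ℕ} {Ω : Type*} [MeasurableSpace Ω] (μ : Measure Ω) [IsProbabilityMeasure μ]
    (Z : Ω → EuclideanSpace ℝ (Fin m)) (hZmeas : Measurable Z) (hZ : IsStdGaussian μ Z)
    (v : EuclideanSpace ℝ (Fin m)) (hv : v ≠ 0) (c : ℝ) :
    μ {ω | ∑ i, Z ω i * v i = c} = 0 := by
  classical
  have hZi : ∀ i, Measurable (fun ω => Z ω i) := fun i => (measurable_pi_apply i).comp ((WithLp.measurable_ofLp _ _).comp hZmeas)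
  obtain ⟨i, hi⟩ : ∃ i, v i ≠ 0 := by
    by_contra h
    push_neg at h
    exact hv (by ext j; simpa using h j)
  set S : Finset (Fin m) := Finset.univ.erase i with hS
  set W : Ω → ℝ := fun ω => ∑ j ∈ S, Z ω j * v j with hWdef
  have hWmeas : Measurable W := Finset.measurable_sum _ fun j _ => (hZi j).mul_const _
  have hind : IndepFun W (fun ω => Z ω i) μ := by
    have h1 := hZ.2.indepFun_finset S {i} (by simp [hS]) hZi
    have h2 : Measurable fun u : (j : S) → ℝ => ∑ j : S, u j * v (j : Fin m) :=
      Finset.measurable_sum _ fun j _ => (measurable_pi_apply j).mul_const _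
    have h3 : Measurable fun u : (j : ({i} : Finset (Fin m))) → ℝ =>
        u ⟨i, Finset.mem_singleton_self i⟩ := measurable_pi_apply _
    have h4 := h1.comp h2 h3
    have hWe : W = fun a => ∑ j : S, Z a (j : Fin m) * v (j : Fin m) :=
      funext fun a => (Finset.sum_coe_sort S _).symm
    rw [hWe]
    exact h4
  have hD : MeasurableSet {p : ℝ × ℝ | p.1 + p.2 * v i = c} :=
    (measurable_fst.add (measurable_snd.mul_const _)) (measurableSet_singleton c)
  have hpairmeas : Measurable fun ω => (W ω, Z ω i) := hWmeas.prodMk (hZi i)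
  have hset : {ω | ∑ j, Z ω j * v j = c}
      = (fun ω => (W ω, Z ω i)) ⁻¹' {p : ℝ × ℝ | p.1 + p.2 * v i = c} := by
    ext ω
    have hsum : ∑ j, Z ω j * v j = W ω + Z ω i * v i :=
      (Finset.sum_erase_add Finset.univ _ (Finset.mem_univ i)).symm
    simp only [Set.mem_setOf_eq, Set.mem_preimage, hsum]
  rw [hset, ← Measure.map_apply hpairmeas hD,
    (ProbabilityTheory.indepFun_iff_map_prod_eq_prod_map_map hWmeas.aemeasurable
      (hZi i).aemeasurable).mp hind, hZ.1 i, Measure.prod_apply hD]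
  have hzero : ∀ w : ℝ,
      (gaussianReal 0 1) (Prod.mk w ⁻¹' {p : ℝ × ℝ | p.1 + p.2 * v i = c}) = 0 := by
    intro w
    have hsl : Prod.mk w ⁻¹' {p : ℝ × ℝ | p.1 + p.2 * v i = c} = {(c - w) / v i} := by
      ext x
      simp only [Set.mem_preimage, Set.mem_setOf_eq, Set.mem_singleton_iff]
      constructor
      · intro h; field_simp; linarith
      · intro h; rw [h]; field_simp; ring
    rw [hsl]
    exact gaussianReal_absolutelyContinuous 0 one_ne_zero (Real.volume_singleton)
  simp only [hzero, lintegral_zero]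

/-- The perturbed loss `L(θ) = E[max_{y ∈ Y}(θ+Z)ᵀy] − θᵀy*` has gradient
`∇L(θ) = E[argmax_{y ∈ Y}(θ+Z)ᵀy] − y*` (Equation (6) of the paper), for any
measurable argmax selection `g`. -/
theorem perturbed_loss_gradient {m : ℕ} {Ω : Type*} [MeasurableSpace Ω]
    (μ : Measure Ω) [IsProbabilityMeasure μ]
    (Y : Finset (EuclideanSpace ℝ (Fin m))) (hY : Y.Nonempty)
    (ystar : EuclideanSpace ℝ (Fin m)) (hystar : ystar ∈ Y)
    (Z : Ω → EuclideanSpace ℝ (Fin m)) (hZmeas : Measurable Z)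
    (hZ : IsStdGaussian μ Z)
    (g : EuclideanSpace ℝ (Fin m) → EuclideanSpace ℝ (Fin m))
    (hgmeas : Measurable g)
    (hg : ∀ z, g z ∈ Y ∧ ∀ y ∈ Y, ⟪z, y⟫ ≤ ⟪z, g z⟫) :
    ∀ θ : EuclideanSpace ℝ (Fin m),
      HasGradientAt (fun θ' : EuclideanSpace ℝ (Fin m) =>
          (∫ ω, Y.sup' hY (fun y => ⟪θ' + Z ω, y⟫) ∂μ) - ⟪θ', ystar⟫)
        ((∫ ω, g (θ + Z ω) ∂μ) - ystar) θ := by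
  classical
  intro θ
  set f : EuclideanSpace ℝ (Fin m) → ℝ := fun x => Y.sup' hY (fun y => ⟪x, y⟫) with hfdef
  set C : ℝ := Y.sup' hY (fun y => ‖y‖) with hCdef
  have hyC : ∀ y ∈ Y, ‖y‖ ≤ C := fun y hy => Finset.le_sup' _ hy
  have hC0 : 0 ≤ C := le_trans (norm_nonneg _) (hyC _ hY.choose_spec)
  have hle : ∀ x, ∀ y ∈ Y, ⟪x, y⟫ ≤ f x := fun x y hy => Finset.le_sup' _ hy
  have hfg : ∀ x, f x = ⟪x, g x⟫ := fun x =>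
    le_antisymm (Finset.sup'_le _ _ fun y hy => (hg x).2 y hy) (hle x _ (hg x).1)
  have hlow : ∀ x u, f x + ⟪u, g x⟫ ≤ f (x + u) := by
    intro x u
    have h1 := hle (x + u) (g x) (hg x).1
    rw [inner_add_left] at h1
    rw [hfg x]
    linarith
  have hupp : ∀ x u, f (x + u) ≤ f x + ⟪u, g (x + u)⟫ := by
    intro x u
    have h1 := hle x (g (x + u)) (hg (x + u)).1
    rw [hfg (x + u), inner_add_left]
    linarith
  -- Lipschitz continuity of f
  have hdiff : ∀ x x', f x - f x' ≤ C * ‖x - x'‖ := by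
    intro x x'
    have h1 := hlow x (x' - x)
    have hxe : x + (x' - x) = x' := by abel
    rw [hxe] at h1
    have h2 : -⟪x' - x, g x⟫ ≤ C * ‖x - x'‖ := by
      calc -⟪x' - x, g x⟫ ≤ |⟪x' - x, g x⟫| := neg_le_abs _
        _ ≤ ‖x' - x‖ * ‖g x‖ := abs_real_inner_le_norm _ _
        _ ≤ ‖x' - x‖ * C := mul_le_mul_of_nonneg_left (hyC _ (hg x).1) (norm_nonneg _)
        _ = C * ‖x - x'‖ := by rw [mul_comm, norm_sub_rev]
    linarith
  have hfcont : Continuous f := by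
    refine (LipschitzWith.of_dist_le_mul (K := ⟨C, hC0⟩) (f := f) ?_).continuous
    intro x x'
    rw [Real.dist_eq, dist_eq_norm]
    refine abs_sub_le_iff.2 ⟨hdiff x x', ?_⟩
    rw [norm_sub_rev]; exact hdiff x' x
  -- measurability and integrability
  have hZi : ∀ i, Measurable (fun ω => Z ω i) := fun i => (measurable_pi_apply i).comp ((WithLp.measurable_ofLp _ _).comp hZmeas)
  have hZii : ∀ i, Integrable (fun ω => Z ω i) μ := by
    intro i
    have h1 : Integrable (fun x : ℝ => x) (Measure.map (fun ω => Z ω i) μ) := by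
      rw [hZ.1 i]; exact integrable_id_gaussianReal
    exact (integrable_map_measure aestronglyMeasurable_id (hZi i).aemeasurable).mp h1
  have hZint : Integrable Z μ := by
    have hrw : Z = fun ω => ∑ i, Z ω i • (EuclideanSpace.basisFun (Fin m) ℝ) i := by
      funext ω
      have h1 := (EuclideanSpace.basisFun (Fin m) ℝ).sum_repr (Z ω)
      simp only [EuclideanSpace.basisFun_repr] at h1
      exact h1.symm
    rw [hrw]
    exact integrable_finset_sum _ fun i _ => (hZii i).smul_const _
  have hnormZ : Integrable (fun ω => ‖Z ω‖) μ := hZint.norm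
  have hIf : ∀ θ' : EuclideanSpace ℝ (Fin m), Integrable (fun ω => f (θ' + Z ω)) μ := by
    intro θ'
    refine (((integrable_const ‖θ'‖).add hnormZ).const_mul C).mono'
      ((hfcont.measurable.comp (measurable_const.add hZmeas)).aestronglyMeasurable)
      (ae_of_all _ fun ω => ?_)
    have h1 : |f (θ' + Z ω)| ≤ C * ‖θ' + Z ω‖ := by
      rw [hfg]
      calc |⟪θ' + Z ω, g (θ' + Z ω)⟫| ≤ ‖θ' + Z ω‖ * ‖g (θ' + Z ω)‖ :=
            abs_real_inner_le_norm _ _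
        _ ≤ ‖θ' + Z ω‖ * C := mul_le_mul_of_nonneg_left (hyC _ (hg _).1) (norm_nonneg _)
        _ = C * ‖θ' + Z ω‖ := mul_comm _ _
    calc ‖f (θ' + Z ω)‖ = |f (θ' + Z ω)| := rfl
      _ ≤ C * ‖θ' + Z ω‖ := h1
      _ ≤ C * (‖θ'‖ + ‖Z ω‖) := mul_le_mul_of_nonneg_left (norm_add_le _ _) hC0
  have hgm : ∀ θ' : EuclideanSpace ℝ (Fin m),
      AEStronglyMeasurable (fun ω => g (θ' + Z ω)) μ := fun θ' =>
    ((hgmeas.comp (measurable_const.add hZmeas))).aestronglyMeasurable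
  have hIg : ∀ θ' : EuclideanSpace ℝ (Fin m), Integrable (fun ω => g (θ' + Z ω)) μ :=
    fun θ' => (integrable_const C).mono' (hgm θ') (ae_of_all _ fun ω => hyC _ (hg _).1)
  have hεint : ∀ θ' : EuclideanSpace ℝ (Fin m),
      Integrable (fun ω => ‖g (θ' + Z ω) - g (θ + Z ω)‖) μ :=
    fun θ' => ((hIg θ').sub (hIg θ)).norm
  set ε : EuclideanSpace ℝ (Fin m) → ℝ :=
    fun θ' => ∫ ω, ‖g (θ' + Z ω) - g (θ + Z ω)‖ ∂μ with hεdef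
  have hε0 : ∀ θ', 0 ≤ ε θ' := fun θ' => integral_nonneg fun ω => norm_nonneg _
  -- a.e. no ties
  have haetie : ∀ᵐ ω ∂μ, ∀ y ∈ Y, ∀ y' ∈ Y, y ≠ y' →
      ⟪θ + Z ω, y⟫ ≠ ⟪θ + Z ω, y'⟫ := by
    rw [Finset.eventually_all]
    intro y hy
    rw [Finset.eventually_all]
    intro y' hy'
    rcases eq_or_ne y y' with rfl | hne
    · exact ae_of_all _ fun ω h => absurd rfl h
    · refine (?_ : ∀ᵐ ω ∂μ, ⟪θ + Z ω, y⟫ ≠ ⟪θ + Z ω, y'⟫).mono fun ω h _ => h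
      rw [ae_iff]
      refine measure_mono_null (fun ω hω => ?_)
        (null_sum μ Z hZmeas hZ (y - y') (sub_ne_zero.mpr hne) (-⟪θ, y - y'⟫))
      have heq : ⟪θ + Z ω, y⟫ = ⟪θ + Z ω, y'⟫ := not_not.mp hω
      show ∑ i, Z ω i * (y - y') i = -⟪θ, y - y'⟫
      have h1 : ⟪θ + Z ω, y - y'⟫ = 0 := by rw [inner_sub_right, heq, sub_self]
      rw [inner_add_left] at h1
      have h2 : ⟪Z ω, y - y'⟫ = ∑ i, Z ω i * (y - y') i := by
        simp [PiLp.inner_apply, RCLike.inner_apply, conj_trivial]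
        exact Finset.sum_congr rfl fun i _ => mul_comm _ _
      linarith
  -- local constancy of g at no-tie points
  have hsel : ∀ x : EuclideanSpace ℝ (Fin m),
      (∀ y ∈ Y, ∀ y' ∈ Y, y ≠ y' → ⟪x, y⟫ ≠ ⟪x, y'⟫) →
      ∀ᶠ x' in nhds x, g x' = g x := by
    intro x hx
    have hev : ∀ᶠ x' in nhds x, ∀ y ∈ Y, y ≠ g x → ⟪x', y⟫ < ⟪x', g x⟫ := by
      rw [Finset.eventually_all]
      intro y hy
      rcases eq_or_ne y (g x) with rfl | hne
      · exact Filter.Eventually.of_forall fun x' h => absurd rfl h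
      · have hcont : Continuous fun x' : EuclideanSpace ℝ (Fin m) =>
            ⟪x', g x⟫ - ⟪x', y⟫ :=
          (continuous_id.inner continuous_const).sub (continuous_id.inner continuous_const)
        have hpos : (0:ℝ) < ⟪x, g x⟫ - ⟪x, y⟫ :=
          sub_pos.mpr (lt_of_le_of_ne ((hg x).2 y hy) (hx y hy (g x) (hg x).1 hne))
        filter_upwards [(hcont.tendsto x).eventually (eventually_gt_nhds hpos)] with x' h' _
        linarith [sub_pos.mp h']
    refine hev.mono fun x' h' => ?_
    by_contra hgne
    have h1 : ⟪x', g x'⟫ < ⟪x', g x⟫ := h' (g x') (hg x').1 hgne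
    have h2 : ⟪x', g x⟫ ≤ ⟪x', g x'⟫ := (hg x').2 (g x) (hg x).1
    linarith
  -- ε tends to 0
  have hεt : Tendsto ε (nhds θ) (nhds 0) := by
    have h := MeasureTheory.tendsto_integral_filter_of_dominated_convergence (μ := μ)
        (l := nhds θ) (F := fun θ' ω => ‖g (θ' + Z ω) - g (θ + Z ω)‖)
        (f := fun _ : Ω => (0:ℝ)) (bound := fun _ => 2 * C)
        (Filter.Eventually.of_forall fun θ' => (hεint θ').aestronglyMeasurable)
        (Filter.Eventually.of_forall fun θ' => ae_of_all _ fun ω => by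
          have h1 : ‖g (θ' + Z ω) - g (θ + Z ω)‖ ≤ ‖g (θ' + Z ω)‖ + ‖g (θ + Z ω)‖ :=
            norm_sub_le _ _
          have h2 := hyC _ (hg (θ' + Z ω)).1
          have h3 := hyC _ (hg (θ + Z ω)).1
          calc ‖‖g (θ' + Z ω) - g (θ + Z ω)‖‖ = ‖g (θ' + Z ω) - g (θ + Z ω)‖ :=
                norm_norm _
            _ ≤ 2 * C := by linarith)
        (integrable_const _) ?_
    · simpa using h
    · filter_upwards [haetie] with ω hω
      have htz : Tendsto (fun θ' : EuclideanSpace ℝ (Fin m) => θ' + Z ω)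
          (nhds θ) (nhds (θ + Z ω)) := (continuous_id.add continuous_const).tendsto θ
      have hev2 : ∀ᶠ θ' in nhds θ, g (θ' + Z ω) = g (θ + Z ω) :=
        htz.eventually (hsel (θ + Z ω) hω)
      refine Tendsto.congr' ?_ tendsto_const_nhds
      exact hev2.mono fun θ' h => by simp [h]
  -- pointwise sandwich
  have hptl : ∀ (θ' : EuclideanSpace ℝ (Fin m)) ω,
      0 ≤ f (θ' + Z ω) - f (θ + Z ω) - ⟪θ' - θ, g (θ + Z ω)⟫ := by
    intro θ' ω
    have h1 := hlow (θ + Z ω) (θ' - θ)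
    have hxe : θ + Z ω + (θ' - θ) = θ' + Z ω := by abel
    rw [hxe] at h1
    linarith
  have hptu : ∀ (θ' : EuclideanSpace ℝ (Fin m)) ω,
      f (θ' + Z ω) - f (θ + Z ω) - ⟪θ' - θ, g (θ + Z ω)⟫
        ≤ ‖θ' - θ‖ * ‖g (θ' + Z ω) - g (θ + Z ω)‖ := by
    intro θ' ω
    have h1 := hupp (θ + Z ω) (θ' - θ)
    have hxe : θ + Z ω + (θ' - θ) = θ' + Z ω := by abel
    rw [hxe] at h1
    have h2 : ⟪θ' - θ, g (θ' + Z ω)⟫ - ⟪θ' - θ, g (θ + Z ω)⟫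
        = ⟪θ' - θ, g (θ' + Z ω) - g (θ + Z ω)⟫ := (inner_sub_right _ _ _).symm
    have h3 : ⟪θ' - θ, g (θ' + Z ω) - g (θ + Z ω)⟫
        ≤ ‖θ' - θ‖ * ‖g (θ' + Z ω) - g (θ + Z ω)‖ := real_inner_le_norm _ _
    linarith
  -- numerator identity
  set G : EuclideanSpace ℝ (Fin m) := ∫ ω, g (θ + Z ω) ∂μ with hGdef
  have hnum : ∀ θ' : EuclideanSpace ℝ (Fin m),
      ((∫ ω, f (θ' + Z ω) ∂μ) - ⟪θ', ystar⟫) - ((∫ ω, f (θ + Z ω) ∂μ) - ⟪θ, ystar⟫)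
        - ⟪G - ystar, θ' - θ⟫
      = ∫ ω, (f (θ' + Z ω) - f (θ + Z ω) - ⟪θ' - θ, g (θ + Z ω)⟫) ∂μ := by
    intro θ'
    have h1 : ⟪G - ystar, θ' - θ⟫ = ⟪G, θ' - θ⟫ - ⟪ystar, θ' - θ⟫ := inner_sub_left _ _ _
    have h2 : ⟪G, θ' - θ⟫ = ∫ ω, ⟪θ' - θ, g (θ + Z ω)⟫ ∂μ := by
      rw [real_inner_comm, hGdef]
      exact (integral_inner (hIg θ) (θ' - θ)).symm
    have hA : (∫ ω, (f (θ' + Z ω) - f (θ + Z ω)) ∂μ)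
        = (∫ ω, f (θ' + Z ω) ∂μ) - ∫ ω, f (θ + Z ω) ∂μ :=
      integral_sub (hIf θ') (hIf θ)
    have h3 : ∫ ω, (f (θ' + Z ω) - f (θ + Z ω) - ⟪θ' - θ, g (θ + Z ω)⟫) ∂μ
        = ((∫ ω, f (θ' + Z ω) ∂μ) - (∫ ω, f (θ + Z ω) ∂μ))
          - ∫ ω, ⟪θ' - θ, g (θ + Z ω)⟫ ∂μ := by
      rw [← hA]
      exact integral_sub ((hIf θ').sub (hIf θ)) ((hIg θ).const_inner _)
    have h4 : ⟪ystar, θ' - θ⟫ = ⟪θ', ystar⟫ - ⟪θ, ystar⟫ := by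
      rw [inner_sub_right, real_inner_comm ystar θ', real_inner_comm ystar θ]
    rw [h3, h1, h2, h4]
    ring
  have hN : ∀ θ' : EuclideanSpace ℝ (Fin m),
      ‖((∫ ω, f (θ' + Z ω) ∂μ) - ⟪θ', ystar⟫) - ((∫ ω, f (θ + Z ω) ∂μ) - ⟪θ, ystar⟫)
        - ⟪G - ystar, θ' - θ⟫‖ ≤ ‖θ' - θ‖ * ε θ' := by
    intro θ'
    rw [hnum θ', Real.norm_eq_abs,
      abs_of_nonneg (integral_nonneg fun ω => hptl θ' ω)]
    calc ∫ ω, (f (θ' + Z ω) - f (θ + Z ω) - ⟪θ' - θ, g (θ + Z ω)⟫) ∂μ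
        ≤ ∫ ω, ‖θ' - θ‖ * ‖g (θ' + Z ω) - g (θ + Z ω)‖ ∂μ :=
          integral_mono (((hIf θ').sub (hIf θ)).sub ((hIg θ).const_inner _))
            ((hεint θ').const_mul _) (fun ω => hptu θ' ω)
      _ = ‖θ' - θ‖ * ε θ' := integral_const_mul _ _
  -- conclusion
  show HasGradientAt (fun θ' => (∫ ω, f (θ' + Z ω) ∂μ) - ⟪θ', ystar⟫) (G - ystar) θ
  rw [hasGradientAt_iff_tendsto]
  refine squeeze_zero (fun θ' => ?_) (fun θ' => ?_) hεt
  · positivity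
  · calc ‖θ' - θ‖⁻¹ * ‖((∫ ω, f (θ' + Z ω) ∂μ) - ⟪θ', ystar⟫)
          - ((∫ ω, f (θ + Z ω) ∂μ) - ⟪θ, ystar⟫) - ⟪G - ystar, θ' - θ⟫‖
        ≤ ‖θ' - θ‖⁻¹ * (‖θ' - θ‖ * ε θ') :=
          mul_le_mul_of_nonneg_left (hN θ') (inv_nonneg.2 (norm_nonneg _))
      _ ≤ ε θ' := by
        rcases eq_or_ne θ' θ with rfl | hne
        · simp [hε0 θ']
        · rw [← mul_assoc, inv_mul_cancel₀ (norm_ne_zero_iff.2 (sub_ne_zero.2 hne)), one_mul]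
end
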